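/- Let P ≻ 0 be symmetric on ℝᵐ, A ∈ ℝ^{m×m}, B ∈ ℝ^{m×k}, and μ ≥ 0, ε > 0, w̄ ≥ 0. Suppose the block matrix [[Aᵀ P + P A + (μ w̄²/ε²) P, P B],[Bᵀ P, −μ I]] is negative definite. Then for every x ∈ ℝᵐ and d ∈ ℝᵏ with xᵀ P x ≥ ε² and dᵀ d ≤ w̄², one has 2 xᵀ P (A x + B d) < 0. -/

import Mathlib

open Matrix

lemma symm_dot_swap {m : ℕ} (P : Matrix (Fin m) (Fin m) ℝ) (hP : P.IsSymm)
    (u v : Fin m → ℝ) : u ⬝ᵥ P *ᵥ v = v ⬝ᵥ P *ᵥ u := by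
  rw [Matrix.dotProduct_mulVec, ← Matrix.mulVec_transpose, hP.eq,
    dotProduct_comm]

theorem lyapunov_lmi_decrease (m k : ℕ)
    (P A : Matrix (Fin m) (Fin m) ℝ)
    (hPsymm : P.IsSymm) (hPpd : P.PosDef)
    (B : Matrix (Fin m) (Fin k) ℝ)
    (μ ε wbar : ℝ) (hμ : 0 ≤ μ) (hε : 0 < ε) (hwbar : 0 ≤ wbar)
    (hND : (-(Matrix.fromBlocks
        (Aᵀ * P + P * A + (μ * wbar ^ 2 / ε ^ 2) • P)
        (P * B) (Bᵀ * P)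
        (-(μ • (1 : Matrix (Fin k) (Fin k) ℝ))))).PosDef) :
    ∀ (x : Fin m → ℝ) (d : Fin k → ℝ),
      ε ^ 2 ≤ x ⬝ᵥ P *ᵥ x → d ⬝ᵥ d ≤ wbar ^ 2 →
        2 * (x ⬝ᵥ P *ᵥ (A *ᵥ x + B *ᵥ d)) < 0 := by
  intro x d hx hd
  have hx0 : x ≠ 0 := by
    intro h
    rw [h] at hx
    simp at hx
    nlinarith
  have hz0 : (Sum.elim x d : Fin m ⊕ Fin k → ℝ) ≠ 0 := by
    intro h
    apply hx0
    funext i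
    exact congrFun h (Sum.inl i)
  have hpos := hND.dotProduct_mulVec_pos hz0
  simp only [star_trivial] at hpos
  rw [Matrix.neg_mulVec, dotProduct_neg, Matrix.fromBlocks_mulVec] at hpos
  rw [sumElim_dotProduct_sumElim] at hpos
  simp only [Matrix.add_mulVec, dotProduct_add, Matrix.smul_mulVec,
    dotProduct_smul, Matrix.neg_mulVec, dotProduct_neg,
    Matrix.one_mulVec, Matrix.mulVec_mulVec,
    Sum.elim_comp_inl, Sum.elim_comp_inr] at hpos
  -- hpos : 0 < -( ... )
  have h1 : x ⬝ᵥ (Aᵀ * P) *ᵥ x = x ⬝ᵥ P *ᵥ (A *ᵥ x) := by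
    rw [← Matrix.mulVec_mulVec, Matrix.dotProduct_mulVec x Aᵀ,
      Matrix.vecMul_transpose, symm_dot_swap P hPsymm, Matrix.dotProduct_mulVec,
      ← Matrix.mulVec_transpose, hPsymm.eq, dotProduct_comm]
  have h2 : x ⬝ᵥ (P * A) *ᵥ x = x ⬝ᵥ P *ᵥ (A *ᵥ x) := by
    rw [← Matrix.mulVec_mulVec]
  have h3 : x ⬝ᵥ (P * B) *ᵥ d = x ⬝ᵥ P *ᵥ (B *ᵥ d) := by
    rw [← Matrix.mulVec_mulVec]
  have h4 : d ⬝ᵥ (Bᵀ * P) *ᵥ x = x ⬝ᵥ P *ᵥ (B *ᵥ d) := by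
    rw [← Matrix.mulVec_mulVec, Matrix.dotProduct_mulVec d Bᵀ,
      Matrix.vecMul_transpose, symm_dot_swap P hPsymm]
  simp only [smul_eq_mul] at hpos
  rw [h1, h2, h3, h4] at hpos
  have hgoal : 2 * (x ⬝ᵥ P *ᵥ (A *ᵥ x + B *ᵥ d)) =
      2 * (x ⬝ᵥ P *ᵥ (A *ᵥ x)) + 2 * (x ⬝ᵥ P *ᵥ (B *ᵥ d)) := by
    rw [Matrix.mulVec_add, dotProduct_add]; ring
  rw [hgoal]
  have hc : 0 ≤ μ * wbar ^ 2 / ε ^ 2 := by positivity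
  have hslack : μ * d ⬝ᵥ d ≤ μ * wbar ^ 2 := by
    exact mul_le_mul_of_nonneg_left hd hμ
  have hP2 : μ * wbar ^ 2 / ε ^ 2 * ε ^ 2 ≤ μ * wbar ^ 2 / ε ^ 2 * (x ⬝ᵥ P *ᵥ x) :=
    mul_le_mul_of_nonneg_left hx hc
  have hε2 : (0:ℝ) < ε ^ 2 := by positivity
  have : μ * wbar ^ 2 / ε ^ 2 * ε ^ 2 = μ * wbar ^ 2 := by field_simp
  nlinarith [hpos]
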